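/- Let R be a Noetherian local domain, G a free R-module of finite rank, and M ⊆ G a submodule of rank equal to rk(G) (i.e., M generates G ⊗_R K over the fraction field K). Then M is a free R-module if and only if the ideal I_G(M) is a principal ideal of R. -/

import Mathlib

private lemma aux_sum_unit {R : Type*} [CommRing R] [IsLocalRing R]
    {α : Type*} (s : Finset α) (f : α → R) (h : IsUnit (∑ i ∈ s, f i)) :
    ∃ i ∈ s, IsUnit (f i) := by
  classical
  induction s using Finset.induction_on with
  | empty => rw [Finset.sum_empty] at h; exact absurd h not_isUnit_zero
  | @insert a s ha ih =>
    rw [Finset.sum_insert ha] at h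
    rcases IsLocalRing.isUnit_or_isUnit_of_isUnit_add h with h1 | h2
    · exact ⟨a, Finset.mem_insert_self a s, h1⟩
    · obtain ⟨i, hi, hu⟩ := ih h2
      exact ⟨i, Finset.mem_insert_of_mem hi, hu⟩

section aux
variable {R : Type*} [CommRing R] [IsDomain R]
    {G : Type*} [AddCommGroup G] [Module R G]
    {ι : Type*} [Fintype ι] [DecidableEq ι] (b : Module.Basis ι R G)
    (M : Submodule R G)

/-- coordinate matrix of a family of elements of `M` in the basis `b`. -/
noncomputable def cmat (v : ι → ↥M) : Matrix ι ι R :=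
  Matrix.of fun i j => b.repr (v j : G) i

omit [IsDomain R] [Fintype ι] in
private lemma cmat_update (v : ι → ↥M) (j : ι) (m : ↥M) :
    cmat b M (Function.update v j m) =
      (cmat b M v).updateCol j (fun i => b.repr (m : G) i) := by
  ext i j'
  by_cases h : j' = j
  · subst h; simp [cmat, Matrix.updateCol_apply, Function.update]
  · simp [cmat, Matrix.updateCol_apply, h, Function.update, h]

omit [IsDomain R] [DecidableEq ι] in
private lemma cmat_mulVec (v : ι → ↥M) (g : ι → R) (i : ι) :
    (cmat b M v).mulVec g i = b.repr ((∑ j, g j • v j : ↥M) : G) i := by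
  simp only [Matrix.mulVec, dotProduct, cmat, Matrix.of_apply]
  rw [Submodule.coe_sum]
  simp only [map_sum, Submodule.coe_smul, map_smul, Finsupp.coe_finset_sum,
    Finset.sum_apply, Finsupp.coe_smul, Pi.smul_apply, smul_eq_mul, mul_comm]

private lemma li_of_det (v : ι → ↥M) (hd : (cmat b M v).det ≠ 0) :
    LinearIndependent R v := by
  rw [Fintype.linearIndependent_iff]
  intro g hg i
  have h0 : (cmat b M v).mulVec g = 0 := by
    ext i
    rw [cmat_mulVec, hg]
    simp
  have h1 : (cmat b M v).det • g = 0 := by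
    have := congrArg (fun w => (cmat b M v).adjugate.mulVec w) h0
    simpa [Matrix.mulVec_mulVec, Matrix.adjugate_mul, Matrix.smul_mulVec,
      Matrix.one_mulVec] using this
  have := congrFun h1 i
  simp only [Pi.smul_apply, smul_eq_mul, Pi.zero_apply] at this
  exact (mul_eq_zero.mp this).resolve_left hd

private lemma span_of_det (v : ι → ↥M)
    (hd : (cmat b M v).det ≠ 0)
    (hminor : ∀ w : ι → ↥M, (cmat b M w).det ∈ Ideal.span {(cmat b M v).det}) :
    ⊤ ≤ Submodule.span R (Set.range v) := by
  intro m _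
  set A := cmat b M v with hA
  set f : ι → R := fun i => b.repr (m : G) i with hf
  have hc : ∀ j, A.cramer f j ∈ Ideal.span {A.det} := by
    intro j
    rw [Matrix.cramer_apply]
    have h1 : A.updateCol j f = cmat b M (Function.update v j m) :=
      (cmat_update b M v j m).symm
    rw [h1]; exact hminor _
  choose t ht using fun j => Ideal.mem_span_singleton'.mp (hc j)
  have hcr : A.mulVec (A.cramer f) = A.det • f := Matrix.mulVec_cramer A f
  have htc : (A.det • t) = A.cramer f := by
    ext j; simp only [Pi.smul_apply, smul_eq_mul, mul_comm]; exact ht j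
  have hAt : A.mulVec t = f := by
    funext i
    have h2 : A.det • A.mulVec t = A.det • f := by
      rw [← Matrix.mulVec_smul, htc, hcr]
    have := congrFun h2 i
    simp only [Pi.smul_apply, smul_eq_mul] at this
    exact mul_left_cancel₀ hd this
  have hm : m = ∑ j, t j • v j := by
    apply Subtype.ext
    apply b.repr.injective
    ext i
    have := cmat_mulVec b M v t i
    rw [← hA] at this
    rw [← this, hAt]
  rw [hm]
  exact Submodule.sum_mem _ fun j _ => Submodule.smul_mem _ _
    (Submodule.subset_span ⟨j, rfl⟩)

omit [IsDomain R] [DecidableEq ι] in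
private lemma cmat_decomp {κ : Type*} [Fintype κ] (c : Module.Basis κ R ↥M) (e : κ ≃ ι)
    (v : ι → ↥M) :
    cmat b M v = cmat b M (fun i => c (e.symm i)) *
      (Matrix.of fun j' j => c.repr (v j) (e.symm j')) := by
  ext i j
  have hv : (v j : G) = ∑ k, c.repr (v j) k • ((c k : ↥M) : G) := by
    have := c.sum_repr (v j)
    conv_lhs => rw [← this]
    rw [Submodule.coe_sum]
    simp
  simp only [Matrix.mul_apply, cmat, Matrix.of_apply]
  rw [hv]
  rw [map_sum]
  simp only [map_smul, Finsupp.coe_finset_sum, Finset.sum_apply, Finsupp.coe_smul,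
    Pi.smul_apply, smul_eq_mul]
  exact (Fintype.sum_equiv e.symm _ _ (fun j' => by rw [mul_comm])).symm

end aux

/-- Lemma 2.4. Let `R` be a Noetherian local domain, `G` a
free `R`-module of finite rank (with basis `b` indexed by the finite type `ι`),
and `M ⊆ G` a submodule of rank equal to `rk G` (i.e. `M` generates `G ⊗ K`
over the fraction field `K`; equivalently, every element of `G` has a nonzero
multiple in `M`).  Then `M` is free iff the ideal `I_G(M)` of maximal minors —
the ideal generated by the determinants of all square matrices of coordinates
of elements of `M` in the basis `b` — is principal. -/
theorem stmt_0
    {R : Type*} [CommRing R] [IsDomain R] [IsNoetherianRing R] [IsLocalRing R]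
    {G : Type*} [AddCommGroup G] [Module R G]
    {ι : Type*} [Fintype ι] [DecidableEq ι] (b : Module.Basis ι R G)
    (M : Submodule R G)
    (hfull : ∀ g : G, ∃ r : R, r ≠ 0 ∧ r • g ∈ M) :
    Module.Free R ↥M ↔
      (Ideal.span {d : R | ∃ v : ι → ↥M,
        d = Matrix.det (Matrix.of fun i j => b.repr (v j : G) i)}).IsPrincipal := by
  classical
  set S : Set R := {d : R | ∃ v : ι → ↥M, d = (cmat b M v).det} with hSdef
  show Module.Free R ↥M ↔ (Ideal.span S).IsPrincipal
  -- the scaled basis family, lying in M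
  choose r hr0 hrM using fun i => hfull (b i)
  set vr : ι → ↥M := fun i => ⟨r i • b i, hrM i⟩ with hvr
  have hcvr : cmat b M vr = Matrix.diagonal r := by
    ext i j
    simp only [cmat, Matrix.of_apply, hvr, map_smul, Finsupp.coe_smul, Pi.smul_apply,
      smul_eq_mul, Module.Basis.repr_self, Matrix.diagonal_apply]
    by_cases h : i = j
    · subst h; simp [Finsupp.single_apply]
    · simp [Finsupp.single_apply, h, Ne.symm h]
  have hdvr : (cmat b M vr).det ≠ 0 := by
    rw [hcvr, Matrix.det_diagonal]
    exact Finset.prod_ne_zero_iff.mpr fun i _ => hr0 i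
  have hvrS : (cmat b M vr).det ∈ S := ⟨vr, rfl⟩
  -- linear independence of vr in M
  have hlivr : LinearIndependent R vr := li_of_det b M vr hdvr
  constructor
  · -- free → principal
    intro hfree
    haveI : Module.Finite R G := Module.Finite.of_basis b
    haveI : IsNoetherian R G := isNoetherian_of_isNoetherianRing_of_finite R G
    haveI : Module.Finite R ↥M := ⟨IsNoetherian.noetherian ⊤⟩
    set κ := Module.Free.ChooseBasisIndex R ↥M
    set c : Module.Basis κ R ↥M := Module.Free.chooseBasis R ↥M
    have hle1 : Fintype.card κ ≤ Fintype.card ι :=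
      b.card_le_card_of_linearIndependent (c.linearIndependent.map' M.subtype M.ker_subtype)
    have hle2 : Fintype.card ι ≤ Fintype.card κ :=
      c.card_le_card_of_linearIndependent hlivr
    have e : κ ≃ ι := Fintype.equivOfCardEq (le_antisymm hle1 hle2)
    set g : R := (cmat b M (fun i => c (e.symm i))).det with hg
    have hspan : Ideal.span S = Ideal.span {g} := by
      apply le_antisymm
      · rw [Ideal.span_le]
        rintro d ⟨v, rfl⟩
        rw [cmat_decomp b M c e v, Matrix.det_mul, ← hg]
        exact Ideal.mem_span_singleton'.mpr ⟨_, mul_comm _ _⟩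
      · rw [Ideal.span_le, Set.singleton_subset_iff]
        exact Ideal.subset_span ⟨_, rfl⟩
    rw [hspan]
    exact ⟨⟨g, rfl⟩⟩
  · -- principal → free
    rintro ⟨g, hg⟩
    have hg' : Ideal.span S = Ideal.span {g} := hg
    have hg0 : g ≠ 0 := by
      intro h0
      have hmem : (cmat b M vr).det ∈ Ideal.span S := Ideal.subset_span hvrS
      rw [hg', h0, Ideal.span_singleton_eq_bot.mpr rfl] at hmem
      exact hdvr (Submodule.mem_bot R |>.mp hmem)
    have hgS : g ∈ Ideal.span S := by
      rw [hg']; exact Ideal.subset_span rfl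
    obtain ⟨cf, hsupp, hsum⟩ := Submodule.mem_span_set.mp hgS
    have key : ∀ a ∈ cf.support, ∃ t, t * g = a := fun a ha =>
      Ideal.mem_span_singleton'.mp (hg' ▸ Ideal.subset_span (hsupp ha))
    choose! t ht using key
    have hone : (∑ a ∈ cf.support, cf a * t a) * g = 1 * g := by
      rw [one_mul, Finset.sum_mul]
      calc ∑ a ∈ cf.support, cf a * t a * g
          = ∑ a ∈ cf.support, cf a * a := by
            refine Finset.sum_congr rfl fun a ha => ?_
            rw [mul_assoc, ht a ha]
        _ = g := by
            rw [← hsum, Finsupp.sum]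
            exact Finset.sum_congr rfl fun a _ => (smul_eq_mul _ _).symm
    have hone' : (∑ a ∈ cf.support, cf a * t a) = 1 := mul_right_cancel₀ hg0 hone
    obtain ⟨a, haS, hua⟩ := aux_sum_unit cf.support _ (hone' ▸ isUnit_one)
    have huta : IsUnit (t a) := isUnit_of_mul_isUnit_right hua
    obtain ⟨v, hv⟩ := hsupp haS
    have hassoc : Associated g a := ⟨huta.unit, by rw [IsUnit.unit_spec, mul_comm]; exact ht a haS⟩
    have hspan2 : Ideal.span S = Ideal.span {a} :=
      hg'.trans (Ideal.span_singleton_eq_span_singleton.mpr hassoc)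
    have ha0 : a ≠ 0 := by
      intro h0
      have hmem : (cmat b M vr).det ∈ Ideal.span S := Ideal.subset_span hvrS
      rw [hspan2, h0, Ideal.span_singleton_eq_bot.mpr rfl] at hmem
      exact hdvr (Submodule.mem_bot R |>.mp hmem)
    have hdv : (cmat b M v).det ≠ 0 := by rw [← hv]; exact ha0
    have hminor : ∀ w : ι → ↥M, (cmat b M w).det ∈ Ideal.span {(cmat b M v).det} := by
      intro w
      rw [← hv, ← hspan2]
      exact Ideal.subset_span ⟨w, rfl⟩
    exact Module.Free.of_basis (Module.Basis.mk (li_of_det b M v hdv) (span_of_det b M v hdv hminor))
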